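/- (Surjectivity of the moment transfer operator) Under the hypotheses of Theorem 2 (spectra of A and S disjoint, S = T^{−1}ΣT with T ∈ ℂ^{ν×ν} invertible and Σ = blkdiag(J(s_1,ν_1),…,J(s_d,ν_d))), assume that for every i ∈ {1,…,d} the 0-moment η_0(s_i) = C(s_i I_n − A)^{−1}B + D ∈ ℂ^{p×m} has rank p (full row rank, i.e., the plant is right-invertible at every eigenvalue of S). Then the moment transfer operator T_S : ℝ^{m×ν} → ℝ^{p×ν} is surjective; in particular, for every M_des ∈ ℝ^{p×ν} and every M_open ∈ ℝ^{p×ν} there exists M_c ∈ ℝ^{m×ν} with T_S(M_c) = M_des − M_open. -/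

import Mathlib

open Matrix

/-- The `r × r` Jordan block with eigenvalue `s`. -/
def jordanBlock (s : ℂ) (r : ℕ) : Matrix (Fin r) (Fin r) ℂ :=
  Matrix.of fun i j => if (i : ℕ) = (j : ℕ) then s
    else if (i : ℕ) + 1 = (j : ℕ) then 1 else 0

private lemma exists_right_inv {p m : ℕ} (M : Matrix (Fin p) (Fin m) ℂ)
    (h : M.rank = p) : ∃ R : Matrix (Fin m) (Fin p) ℂ, M * R = 1 := by
  have hr : LinearMap.range M.mulVecLin = ⊤ := by
    apply Submodule.eq_top_of_finrank_eq
    rw [show Module.finrank ℂ ↥(LinearMap.range M.mulVecLin) = M.rank from rfl, h]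
    simp
  obtain ⟨g, hg⟩ := LinearMap.exists_rightInverse_of_surjective M.mulVecLin hr
  refine ⟨Matrix.of fun k j => g (Pi.single j 1) k, ?_⟩
  ext i j
  have h2 : M.mulVecLin (g (Pi.single j 1)) = Pi.single j 1 := LinearMap.congr_fun hg _
  have h3 : (M * Matrix.of fun k j => g (Pi.single j 1) k) i j
      = M.mulVecLin (g (Pi.single j 1)) i := by
    simp [Matrix.mul_apply, Matrix.mulVecLin_apply, Matrix.mulVec, dotProduct]
  rw [h3, h2]
  simp [Pi.single_apply, Matrix.one_apply, eq_comm]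

private noncomputable def chainAux {n m p : ℕ} (E : Matrix (Fin n) (Fin n) ℂ)
    (B : Matrix (Fin n) (Fin m) ℂ) (C : Matrix (Fin p) (Fin n) ℂ)
    (R : Matrix (Fin m) (Fin p) ℂ) (g : ℕ → Fin p → ℂ) : ℕ → (Fin n → ℂ) × (Fin m → ℂ)
  | 0 => (E⁻¹ *ᵥ (B *ᵥ (R *ᵥ g 0)), R *ᵥ g 0)
  | (j+1) =>
      let P := (chainAux E B C R g j).1
      let Mc := R *ᵥ (g (j+1) + (C * E⁻¹) *ᵥ P)
      (E⁻¹ *ᵥ (B *ᵥ Mc - P), Mc)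

private lemma chainAux_one_zero {n m p : ℕ} {E : Matrix (Fin n) (Fin n) ℂ}
    (hE : IsUnit E.det) (B : Matrix (Fin n) (Fin m) ℂ) (C : Matrix (Fin p) (Fin n) ℂ)
    (R : Matrix (Fin m) (Fin p) ℂ) (g : ℕ → Fin p → ℂ) :
    E *ᵥ (chainAux E B C R g 0).1 = B *ᵥ (chainAux E B C R g 0).2 := by
  have Evv : ∀ v : Fin n → ℂ, E *ᵥ (E⁻¹ *ᵥ v) = v := fun v => by
    rw [Matrix.mulVec_mulVec, Matrix.mul_nonsing_inv E hE, Matrix.one_mulVec]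
  show E *ᵥ (E⁻¹ *ᵥ (B *ᵥ (R *ᵥ g 0))) = _
  rw [Evv]; rfl

private lemma chainAux_one_succ {n m p : ℕ} {E : Matrix (Fin n) (Fin n) ℂ}
    (hE : IsUnit E.det) (B : Matrix (Fin n) (Fin m) ℂ) (C : Matrix (Fin p) (Fin n) ℂ)
    (R : Matrix (Fin m) (Fin p) ℂ) (g : ℕ → Fin p → ℂ) (j : ℕ) :
    E *ᵥ (chainAux E B C R g (j+1)).1
      = B *ᵥ (chainAux E B C R g (j+1)).2 - (chainAux E B C R g j).1 := by
  have Evv : ∀ v : Fin n → ℂ, E *ᵥ (E⁻¹ *ᵥ v) = v := fun v => by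
    rw [Matrix.mulVec_mulVec, Matrix.mul_nonsing_inv E hE, Matrix.one_mulVec]
  show E *ᵥ (E⁻¹ *ᵥ _) = _
  rw [Evv]; rfl

private lemma chainAux_two {n m p : ℕ} {E : Matrix (Fin n) (Fin n) ℂ}
    {B : Matrix (Fin n) (Fin m) ℂ} {C : Matrix (Fin p) (Fin n) ℂ}
    {D : Matrix (Fin p) (Fin m) ℂ} {R : Matrix (Fin m) (Fin p) ℂ}
    (hR : (C * E⁻¹ * B + D) * R = 1) (g : ℕ → Fin p → ℂ) (j : ℕ) :
    C *ᵥ (chainAux E B C R g j).1 + D *ᵥ (chainAux E B C R g j).2 = g j := by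
  have key : ∀ w : Fin m → ℂ, C *ᵥ (E⁻¹ *ᵥ (B *ᵥ w)) + D *ᵥ w
      = ((C * E⁻¹ * B + D)) *ᵥ w := fun w => by
    rw [Matrix.mulVec_mulVec, Matrix.mulVec_mulVec, ← Matrix.add_mulVec]
  cases j with
  | zero =>
      show C *ᵥ (E⁻¹ *ᵥ (B *ᵥ (R *ᵥ g 0))) + D *ᵥ (R *ᵥ g 0) = g 0
      rw [key, Matrix.mulVec_mulVec, hR, Matrix.one_mulVec]
  | succ j =>
      set P := (chainAux E B C R g j).1 with hP
      set v := g (j+1) + (C * E⁻¹) *ᵥ P with hv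
      show C *ᵥ (E⁻¹ *ᵥ (B *ᵥ (R *ᵥ v) - P)) + D *ᵥ (R *ᵥ v) = g (j+1)
      rw [Matrix.mulVec_sub, Matrix.mulVec_sub, sub_add_eq_add_sub, key,
        Matrix.mulVec_mulVec, hR, Matrix.one_mulVec, hv]
      simp [Matrix.mulVec_mulVec]

private lemma sigma_col {d : ℕ} (νs : Fin d → ℕ) (s : Fin d → ℂ) (i : Fin d)
    (j : Fin (νs i)) :
    (fun c : (i : Fin d) × Fin (νs i) =>
        blockDiagonal' (fun i => jordanBlock (s i) (νs i)) c ⟨i, j⟩) =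
      Pi.single (⟨i, j⟩ : (i : Fin d) × Fin (νs i)) (s i) +
        (if h : (j : ℕ) = 0 then 0 else
          Pi.single (⟨i, ⟨(j : ℕ) - 1, Nat.lt_of_le_of_lt (Nat.sub_le _ _) j.isLt⟩⟩ :
            (i : Fin d) × Fin (νs i)) 1) := by
  funext c
  rcases c with ⟨i', j'⟩
  rw [Matrix.blockDiagonal'_apply]
  by_cases h : i' = i
  · subst h
    rw [dif_pos rfl, cast_eq]
    by_cases h0 : (j : ℕ) = 0
    · rw [dif_pos h0]
      simp only [jordanBlock, Matrix.of_apply, Pi.add_apply, Pi.single_apply,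
        Sigma.mk.inj_iff, heq_eq_eq, true_and, Pi.zero_apply, add_zero, Fin.ext_iff]
      split_ifs <;> first | rfl | omega
    · rw [dif_neg h0]
      simp only [jordanBlock, Matrix.of_apply, Pi.add_apply, Pi.single_apply,
        Sigma.mk.inj_iff, heq_eq_eq, true_and, Fin.ext_iff]
      split_ifs <;> first | rfl | omega | simp | (exfalso; omega)
  · rw [dif_neg h]
    by_cases h0 : (j : ℕ) = 0
    · rw [dif_pos h0]
      simp [Pi.single_apply, Sigma.mk.inj_iff, h]
    · rw [dif_neg h0]
      simp [Pi.single_apply, Sigma.mk.inj_iff, h]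

private lemma complex_solve {n m p d : ℕ} (νs : Fin d → ℕ) (s : Fin d → ℂ)
    (Ac : Matrix (Fin n) (Fin n) ℂ) (Bc : Matrix (Fin n) (Fin m) ℂ)
    (Cc : Matrix (Fin p) (Fin n) ℂ) (Dc : Matrix (Fin p) (Fin m) ℂ)
    (hE : ∀ i : Fin d, 0 < νs i →
      IsUnit (s i • (1 : Matrix (Fin n) (Fin n) ℂ) - Ac).det)
    (hR : ∀ i : Fin d, ∃ R : Matrix (Fin m) (Fin p) ℂ,
      (Cc * (s i • (1 : Matrix (Fin n) (Fin n) ℂ) - Ac)⁻¹ * Bc + Dc) * R = 1)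
    (N' : Matrix (Fin p) ((i : Fin d) × Fin (νs i)) ℂ) :
    ∃ (M2 : Matrix (Fin m) ((i : Fin d) × Fin (νs i)) ℂ)
      (P2 : Matrix (Fin n) ((i : Fin d) × Fin (νs i)) ℂ),
      P2 * blockDiagonal' (fun i => jordanBlock (s i) (νs i)) = Ac * P2 + Bc * M2 ∧
      Cc * P2 + Dc * M2 = N' := by
  choose R hRinv using hR
  set E : Fin d → Matrix (Fin n) (Fin n) ℂ :=
    fun i => s i • (1 : Matrix (Fin n) (Fin n) ℂ) - Ac with hEdef
  set g : Fin d → ℕ → Fin p → ℂ := fun i j k =>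
    if h : j < νs i then N' k ⟨i, ⟨j, h⟩⟩ else 0 with hgdef
  set ch : (i : Fin d) → ℕ → (Fin n → ℂ) × (Fin m → ℂ) :=
    fun i => chainAux (E i) Bc Cc (R i) (g i) with hchdef
  refine ⟨Matrix.of fun k (c : (i : Fin d) × Fin (νs i)) => (ch c.1 (c.2 : ℕ)).2 k,
    Matrix.of fun k (c : (i : Fin d) × Fin (νs i)) => (ch c.1 (c.2 : ℕ)).1 k, ?_, ?_⟩
  · ext k c
    rcases c with ⟨i, j⟩
    have hpos : 0 < νs i := j.pos
    have hEi : IsUnit (E i).det := hE i hpos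
    have hL : (Matrix.of (fun k (c : (i : Fin d) × Fin (νs i)) => (ch c.1 (c.2 : ℕ)).1 k) *
          blockDiagonal' (fun i => jordanBlock (s i) (νs i))) k ⟨i, j⟩
        = ((Matrix.of fun k (c : (i : Fin d) × Fin (νs i)) => (ch c.1 (c.2 : ℕ)).1 k) *ᵥ
            (fun c' => blockDiagonal' (fun i => jordanBlock (s i) (νs i)) c' ⟨i, j⟩)) k := rfl
    rw [hL, sigma_col νs s i j]
    rw [Matrix.mulVec_add, Matrix.mulVec_single]
    have hRside : (Ac * Matrix.of (fun k (c : (i : Fin d) × Fin (νs i)) => (ch c.1 (c.2 : ℕ)).1 k)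
          + Bc * Matrix.of fun k (c : (i : Fin d) × Fin (νs i)) => (ch c.1 (c.2 : ℕ)).2 k) k ⟨i, j⟩
        = (Ac *ᵥ (ch i (j : ℕ)).1 + Bc *ᵥ (ch i (j : ℕ)).2) k := rfl
    rw [hRside]
    have hmain : ∀ jn : ℕ, Ac *ᵥ (ch i jn).1 + Bc *ᵥ (ch i jn).2
        = s i • (ch i jn).1 + (if jn = 0 then 0 else (ch i (jn - 1)).1) := by
      intro jn
      cases jn with
      | zero =>
          have h1 : (E i) *ᵥ (ch i 0).1 = Bc *ᵥ (ch i 0).2 :=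
            chainAux_one_zero hEi Bc Cc (R i) (g i)
          have h2 : (E i) *ᵥ (ch i 0).1 = s i • (ch i 0).1 - Ac *ᵥ (ch i 0).1 := by
            rw [hEdef, Matrix.sub_mulVec, Matrix.smul_mulVec, Matrix.one_mulVec]
          rw [h2] at h1
          rw [if_pos rfl, add_zero, ← h1]
          abel
      | succ jj =>
          have h1 : (E i) *ᵥ (ch i (jj+1)).1
              = Bc *ᵥ (ch i (jj+1)).2 - (ch i jj).1 :=
            chainAux_one_succ hEi Bc Cc (R i) (g i) jj
          have h2 : (E i) *ᵥ (ch i (jj+1)).1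
              = s i • (ch i (jj+1)).1 - Ac *ᵥ (ch i (jj+1)).1 := by
            rw [hEdef, Matrix.sub_mulVec, Matrix.smul_mulVec, Matrix.one_mulVec]
          rw [h2] at h1
          rw [if_neg (Nat.succ_ne_zero jj)]
          simp only [Nat.add_sub_cancel]
          have h3 : Bc *ᵥ (ch i (jj+1)).2
              = s i • (ch i (jj+1)).1 - Ac *ᵥ (ch i (jj+1)).1 + (ch i jj).1 := by
            rw [← sub_eq_iff_eq_add, ← h1]
          rw [h3]; abel
    have hm := congrFun (hmain (j : ℕ)) k
    rw [hm]
    by_cases h0 : (j : ℕ) = 0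
    · rw [dif_pos h0, if_pos h0]
      simp [Matrix.mulVec_zero, Matrix.of_apply, mul_comm]
    · rw [dif_neg h0, if_neg h0, Matrix.mulVec_single]
      simp only [Pi.add_apply, Pi.smul_apply, smul_eq_mul, mul_one, Matrix.of_apply,
        Matrix.col_apply, op_smul_eq_mul]
      ring_nf
  · ext k c
    rcases c with ⟨i, j⟩
    have hLside : (Cc * Matrix.of (fun k (c : (i : Fin d) × Fin (νs i)) => (ch c.1 (c.2 : ℕ)).1 k)
          + Dc * Matrix.of fun k (c : (i : Fin d) × Fin (νs i)) => (ch c.1 (c.2 : ℕ)).2 k) k ⟨i, j⟩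
        = (Cc *ᵥ (ch i (j : ℕ)).1 + Dc *ᵥ (ch i (j : ℕ)).2) k := rfl
    rw [hLside]
    have h1 : Cc *ᵥ (ch i (j : ℕ)).1 + Dc *ᵥ (ch i (j : ℕ)).2 = g i (j : ℕ) :=
      chainAux_two (hRinv i) (g i) (j : ℕ)
    rw [h1, hgdef]
    simp only [dif_pos j.isLt]

private lemma re_mul_right {l o q : Type*} [Fintype o] (X : Matrix l o ℂ)
    (Y : Matrix o q ℝ) :
    (X * Y.map (Complex.ofReal)).map Complex.re = X.map Complex.re * Y := by
  ext k c
  simp [Matrix.mul_apply, Matrix.map_apply, Complex.re_sum, Complex.mul_re]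

private lemma re_mul_left {l o q : Type*} [Fintype o] (Y : Matrix l o ℝ)
    (X : Matrix o q ℂ) :
    (Y.map (Complex.ofReal) * X).map Complex.re = Y * X.map Complex.re := by
  ext k c
  simp [Matrix.mul_apply, Matrix.map_apply, Complex.re_sum, Complex.mul_re]

private lemma map_re_add {l q : Type*} (X Y : Matrix l q ℂ) :
    (X + Y).map Complex.re = X.map Complex.re + Y.map Complex.re := by
  ext k c
  simp [Matrix.map_apply]

/-- **surjectivity of the moment transfer operator.** Under the hypotheses of
Theorem 2 (spectra of `A` and `S` disjoint, `S = T⁻¹ Σ T` with `Σ` in Jordan form), if for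
every `i` the 0-moment `η_0(s_i) = C(s_i I - A)⁻¹B + D` has full row rank `p`, then the
moment transfer operator `T_S : ℝ^{m×ν} → ℝ^{p×ν}` is surjective; in particular for all
`M_des, M_open ∈ ℝ^{p×ν}` there exists `M_c` with `T_S(M_c) = M_des - M_open`. -/
theorem moment_transfer_operator_surjective
    (n m p d : ℕ) (νs : Fin d → ℕ) (s : Fin d → ℂ)
    (A : Matrix (Fin n) (Fin n) ℝ) (B : Matrix (Fin n) (Fin m) ℝ)
    (C : Matrix (Fin p) (Fin n) ℝ) (D : Matrix (Fin p) (Fin m) ℝ)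
    (S : Matrix ((i : Fin d) × Fin (νs i)) ((i : Fin d) × Fin (νs i)) ℝ)
    (hdisj : ∀ μ : ℂ, ¬(μ ∈ spectrum ℂ (A.map Complex.ofReal) ∧
      μ ∈ spectrum ℂ (S.map Complex.ofReal)))
    (T : Matrix ((i : Fin d) × Fin (νs i)) ((i : Fin d) × Fin (νs i)) ℂ)
    (hT : IsUnit T.det)
    (hJordan : S.map Complex.ofReal =
      T⁻¹ * Matrix.blockDiagonal' (fun i => jordanBlock (s i) (νs i)) * T)
    (hrank : ∀ i : Fin d,
      (C.map Complex.ofReal *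
        ((s i) • (1 : Matrix (Fin n) (Fin n) ℂ) - A.map Complex.ofReal)⁻¹ *
        B.map Complex.ofReal + D.map Complex.ofReal).rank = p) :
    -- surjectivity of `T_S`:
    (∀ N : Matrix (Fin p) ((i : Fin d) × Fin (νs i)) ℝ,
      ∃ (Mc : Matrix (Fin m) ((i : Fin d) × Fin (νs i)) ℝ)
        (PiM : Matrix (Fin n) ((i : Fin d) × Fin (νs i)) ℝ),
        PiM * S = A * PiM + B * Mc ∧ C * PiM + D * Mc = N) ∧
    -- in particular:
    (∀ Mdes Mopen : Matrix (Fin p) ((i : Fin d) × Fin (νs i)) ℝ,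
      ∃ (Mc : Matrix (Fin m) ((i : Fin d) × Fin (νs i)) ℝ)
        (PiM : Matrix (Fin n) ((i : Fin d) × Fin (νs i)) ℝ),
        PiM * S = A * PiM + B * Mc ∧ C * PiM + D * Mc = Mdes - Mopen) := by
  have key : ∀ N : Matrix (Fin p) ((i : Fin d) × Fin (νs i)) ℝ,
      ∃ (Mc : Matrix (Fin m) ((i : Fin d) × Fin (νs i)) ℝ)
        (PiM : Matrix (Fin n) ((i : Fin d) × Fin (νs i)) ℝ),
        PiM * S = A * PiM + B * Mc ∧ C * PiM + D * Mc = N := by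
    intro N
    have hTl : T⁻¹ * T = 1 := Matrix.nonsing_inv_mul T hT
    have hTr : T * T⁻¹ = 1 := Matrix.mul_nonsing_inv T hT
    set Jb := Matrix.blockDiagonal' (fun i => jordanBlock (s i) (νs i)) with hJb
    -- invertibility of s i • 1 - A over ℂ for nonempty blocks
    have hE : ∀ i : Fin d, 0 < νs i →
        IsUnit ((s i) • (1 : Matrix (Fin n) (Fin n) ℂ) - A.map Complex.ofReal).det := by
      intro i hi
      by_contra hcon
      have hm : s i ∈ spectrum ℂ (A.map Complex.ofReal) := by
        rw [spectrum.mem_iff, Algebra.algebraMap_eq_smul_one, Matrix.isUnit_iff_isUnit_det]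
        exact hcon
      have hm2 : s i ∈ spectrum ℂ (S.map Complex.ofReal) := by
        rw [spectrum.mem_iff, Algebra.algebraMap_eq_smul_one, Matrix.isUnit_iff_isUnit_det]
        intro hunit
        -- transport the unit along conjugation by T
        have hsim : T * ((s i) • (1 : Matrix ((i : Fin d) × Fin (νs i))
              ((i : Fin d) × Fin (νs i)) ℂ) - S.map Complex.ofReal) * T⁻¹
            = (s i) • 1 - Jb := by
          rw [hJordan, Matrix.mul_sub, Matrix.sub_mul]
          congr 1
          · rw [Matrix.mul_smul, Matrix.mul_one, Matrix.smul_mul, hTr]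
          · rw [← Matrix.mul_assoc, ← Matrix.mul_assoc, hTr, Matrix.one_mul,
              Matrix.mul_assoc, hTr, Matrix.mul_one]
        have hunit2 : IsUnit ((s i) • (1 : Matrix ((i : Fin d) × Fin (νs i))
              ((i : Fin d) × Fin (νs i)) ℂ) - Jb).det := by
          rw [← hsim, Matrix.det_mul, Matrix.det_mul]
          exact (hT.mul hunit).mul (Matrix.isUnit_nonsing_inv_det T hT)
        -- but the block-diagonal Jordan matrix has s i as an eigenvalue
        set v : ((i : Fin d) × Fin (νs i)) → ℂ :=
          Pi.single (⟨i, ⟨0, hi⟩⟩ : (i : Fin d) × Fin (νs i)) (1 : ℂ) with hv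
        have hv0 : ((s i) • (1 : Matrix ((i : Fin d) × Fin (νs i))
              ((i : Fin d) × Fin (νs i)) ℂ) - Jb) *ᵥ v = 0 := by
          rw [hv, Matrix.mulVec_single]
          funext r
          rcases r with ⟨i', j'⟩
          simp only [Matrix.sub_apply, Matrix.smul_apply, Matrix.one_apply, smul_eq_mul,
            mul_one, hJb, Pi.zero_apply, Pi.smul_apply, Matrix.col_apply, op_smul_eq_mul]
          rw [Matrix.blockDiagonal'_apply]
          by_cases h : i' = i
          · subst h
            rw [dif_pos rfl, cast_eq]
            simp only [jordanBlock, Matrix.of_apply, Sigma.mk.inj_iff, heq_eq_eq,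
              true_and, Fin.ext_iff]
            split_ifs <;> first | ring1 | omega | exact False.elim ‹False›
          · rw [dif_neg h, if_neg (by simp [Sigma.mk.inj_iff, h])]
            simp
        have hvinv : v = 0 := by
          have h5 : ((s i) • (1 : Matrix ((i : Fin d) × Fin (νs i))
                ((i : Fin d) × Fin (νs i)) ℂ) - Jb)⁻¹ *ᵥ
              (((s i) • (1 : Matrix ((i : Fin d) × Fin (νs i))
                ((i : Fin d) × Fin (νs i)) ℂ) - Jb) *ᵥ v) = v := by
            rw [Matrix.mulVec_mulVec, Matrix.nonsing_inv_mul _ hunit2, Matrix.one_mulVec]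
          rw [hv0, Matrix.mulVec_zero] at h5
          exact h5.symm
        have hone : v ⟨i, ⟨0, hi⟩⟩ = 1 := by rw [hv]; simp
        rw [hvinv] at hone
        simp at hone
      exact hdisj (s i) ⟨hm, hm2⟩
    have hR : ∀ i : Fin d, ∃ R : Matrix (Fin m) (Fin p) ℂ,
        (C.map Complex.ofReal *
          ((s i) • (1 : Matrix (Fin n) (Fin n) ℂ) - A.map Complex.ofReal)⁻¹ *
          B.map Complex.ofReal + D.map Complex.ofReal) * R = 1 :=
      fun i => exists_right_inv _ (hrank i)
    obtain ⟨M2, P2, h1, h2⟩ := complex_solve νs s (A.map Complex.ofReal)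
      (B.map Complex.ofReal) (C.map Complex.ofReal) (D.map Complex.ofReal) hE hR
      (N.map Complex.ofReal * T⁻¹)
    -- transform back
    set Pc := P2 * T with hPc
    set Mcx := M2 * T with hMcx
    have cancel : ∀ X : Matrix ((i : Fin d) × Fin (νs i)) ((i : Fin d) × Fin (νs i)) ℂ,
        T * (T⁻¹ * X) = X := fun X => by rw [← Matrix.mul_assoc, hTr, Matrix.one_mul]
    have h1' : Pc * S.map Complex.ofReal
        = A.map Complex.ofReal * Pc + B.map Complex.ofReal * Mcx := by
      rw [hPc, hMcx, hJordan]
      calc P2 * T * (T⁻¹ * Jb * T)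
          = P2 * (T * (T⁻¹ * (Jb * T))) := by
            simp only [Matrix.mul_assoc]
        _ = P2 * (Jb * T) := by rw [cancel]
        _ = (P2 * Jb) * T := by rw [Matrix.mul_assoc]
        _ = (A.map Complex.ofReal * P2 + B.map Complex.ofReal * M2) * T := by rw [h1]
        _ = A.map Complex.ofReal * (P2 * T) + B.map Complex.ofReal * (M2 * T) := by
            rw [Matrix.add_mul, Matrix.mul_assoc, Matrix.mul_assoc]
    have h2' : C.map Complex.ofReal * Pc + D.map Complex.ofReal * Mcx
        = N.map Complex.ofReal := by
      rw [hPc, hMcx, ← Matrix.mul_assoc, ← Matrix.mul_assoc, ← Matrix.add_mul, h2,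
        Matrix.mul_assoc, hTl, Matrix.mul_one]
    refine ⟨Mcx.map Complex.re, Pc.map Complex.re, ?_, ?_⟩
    · calc Pc.map Complex.re * S = (Pc * S.map Complex.ofReal).map Complex.re :=
            (re_mul_right Pc S).symm
        _ = (A.map Complex.ofReal * Pc + B.map Complex.ofReal * Mcx).map Complex.re := by
            rw [h1']
        _ = (A.map Complex.ofReal * Pc).map Complex.re
              + (B.map Complex.ofReal * Mcx).map Complex.re := map_re_add _ _
        _ = A * Pc.map Complex.re + B * Mcx.map Complex.re := by
            rw [re_mul_left, re_mul_left]
    · calc C * Pc.map Complex.re + D * Mcx.map Complex.re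
          = (C.map Complex.ofReal * Pc).map Complex.re
              + (D.map Complex.ofReal * Mcx).map Complex.re := by
            rw [re_mul_left, re_mul_left]
        _ = (C.map Complex.ofReal * Pc + D.map Complex.ofReal * Mcx).map Complex.re :=
            (map_re_add _ _).symm
        _ = (N.map Complex.ofReal).map Complex.re := by rw [h2']
        _ = N := by ext k c; simp [Matrix.map_apply]
  exact ⟨key, fun Mdes Mopen => key (Mdes - Mopen)⟩
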